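/- Let G be a locally compact, Hausdorff, second-countable ample étale groupoid with compact unit space G⁰. The following are equivalent: (i) G is minimal; (ii) for every nonempty compact open U ⊆ G⁰ there exist compact open bisections E₁, …, Eₙ with ⋃ⱼ U_{E_j} = G⁰; (iii) for every nonzero f ∈ C(G⁰, ℤ)⁺ there exist compact open bisections E₁, …, Eₙ with Σⱼ E_j f ≥ 1_{G⁰}. -/

import Mathlib

open Set

/-- A (locally compact, Hausdorff, second-countable) étale groupoid structure on a
topological space `G`.  Multiplication is formalized as a total function whose groupoid
axioms are only imposed on composable pairs (those `(α, β)` with `s α = r β`). -/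
structure EtaleGroupoid (G : Type*) [TopologicalSpace G] where
  unitSpace : Set G
  r : G → G
  s : G → G
  mul : G → G → G
  inv : G → G
  r_mem : ∀ α, r α ∈ unitSpace
  s_mem : ∀ α, s α ∈ unitSpace
  r_unit : ∀ u ∈ unitSpace, r u = u
  s_unit : ∀ u ∈ unitSpace, s u = u
  r_mul : ∀ α β, s α = r β → r (mul α β) = r α
  s_mul : ∀ α β, s α = r β → s (mul α β) = s β
  mul_assoc' : ∀ α β γ, s α = r β → s β = r γ → mul (mul α β) γ = mul α (mul β γ)
  unit_mul : ∀ α, mul (r α) α = α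
  mul_unit : ∀ α, mul α (s α) = α
  r_inv : ∀ α, r (inv α) = s α
  s_inv : ∀ α, s (inv α) = r α
  mul_inv : ∀ α, mul α (inv α) = r α
  inv_mul : ∀ α, mul (inv α) α = s α
  /-- multiplication is continuous on the set of composable pairs -/
  continuousOn_mul : ContinuousOn (fun p : G × G => mul p.1 p.2) {p : G × G | s p.1 = r p.2}
  continuous_inv : Continuous inv
  /-- étale: the range map is a local homeomorphism onto the unit space -/
  isLocalHomeomorph_r : IsLocalHomeomorph fun α => (⟨r α, r_mem α⟩ : unitSpace)
  /-- étale: the source map is a local homeomorphism onto the unit space -/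
  isLocalHomeomorph_s : IsLocalHomeomorph fun α => (⟨s α, s_mem α⟩ : unitSpace)

namespace EtaleGroupoid

variable {G : Type*} [TopologicalSpace G] (𝒢 : EtaleGroupoid G)

/-- A bisection: a set on which both `r` and `s` are injective. -/
def IsBisection (E : Set G) : Prop := Set.InjOn 𝒢.r E ∧ Set.InjOn 𝒢.s E

def IsOpenBisection (E : Set G) : Prop := IsOpen E ∧ 𝒢.IsBisection E

def IsCompactOpenBisection (E : Set G) : Prop := IsCompact E ∧ IsOpen E ∧ 𝒢.IsBisection E

/-- `U` is an open subset of the unit space `G⁰` (in the subspace topology). -/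
def IsUnitOpen (U : Set G) : Prop :=
  U ⊆ 𝒢.unitSpace ∧ ∃ V : Set G, IsOpen V ∧ U = V ∩ 𝒢.unitSpace

/-- `U_E = r(EU) = {r α : α ∈ E, s α ∈ U}`. -/
def ranOn (E U : Set G) : Set G := 𝒢.r '' {α ∈ E | 𝒢.s α ∈ U}

/-- `G` is minimal if every orbit `r(Gu)` is dense in the unit space. -/
def Minimal : Prop :=
  ∀ u ∈ 𝒢.unitSpace, 𝒢.unitSpace ⊆ closure (𝒢.r '' {α | 𝒢.s α = u})

/-- `G` is ample if its topology has a basis of compact open bisections. -/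
def Ample : Prop := ∀ (α : G) (V : Set G), IsOpen V → α ∈ V →
  ∃ E : Set G, 𝒢.IsCompactOpenBisection E ∧ α ∈ E ∧ E ⊆ V

end EtaleGroupoid
namespace EtaleGroupoid

variable {G : Type*} [TopologicalSpace G] (𝒢 : EtaleGroupoid G)

open Classical in
/-- For a bisection `E` and `f : G⁰ → ℤ`, the function `Ef`, with
`Ef(u) = f(s α)` if there is `α ∈ E` with `r α = u`, and `Ef(u) = 0` otherwise. -/
noncomputable def act (E : Set G) (f : G → ℤ) : G → ℤ := fun u =>
  if h : ∃ α ∈ E, 𝒢.r α = u then f (𝒢.s h.choose) else 0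

end EtaleGroupoid

namespace EtaleGroupoid

variable {G : Type*} [TopologicalSpace G] (𝒢 : EtaleGroupoid G)

lemma continuous_r' : Continuous 𝒢.r :=
  continuous_subtype_val.comp 𝒢.isLocalHomeomorph_r.continuous

lemma continuous_s' : Continuous 𝒢.s :=
  continuous_subtype_val.comp 𝒢.isLocalHomeomorph_s.continuous

lemma isClosed_unitSpace' [T2Space G] : IsClosed 𝒢.unitSpace := by
  have h : 𝒢.unitSpace = {α | 𝒢.r α = α} := by
    ext α
    refine ⟨fun h => 𝒢.r_unit _ h, fun h => ?_⟩
    rw [show α = 𝒢.r α from h.symm]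
    exact 𝒢.r_mem α
  rw [h]
  exact isClosed_eq 𝒢.continuous_r' continuous_id

lemma r_image_open (E : Set G) (hE : IsOpen E) :
    ∃ W : Set G, IsOpen W ∧ 𝒢.r '' E = W ∩ 𝒢.unitSpace := by
  have h := 𝒢.isLocalHomeomorph_r.isOpenMap E hE
  rw [isOpen_induced_iff] at h
  obtain ⟨W, hW, hWE⟩ := h
  refine ⟨W, hW, ?_⟩
  have h2 : 𝒢.r '' E = Subtype.val '' ((fun α => (⟨𝒢.r α, 𝒢.r_mem α⟩ : 𝒢.unitSpace)) '' E) := by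
    rw [← Set.image_comp]; rfl
  rw [h2, ← hWE, Subtype.image_preimage_coe, Set.inter_comm]

end EtaleGroupoid
namespace EtaleGroupoid

variable {G : Type*} [TopologicalSpace G] (𝒢 : EtaleGroupoid G)

lemma prop_ii_of_minimal (hample : 𝒢.Ample) (hcompact : IsCompact 𝒢.unitSpace)
    (hmin : 𝒢.Minimal) :
    ∀ U : Set G, 𝒢.IsUnitOpen U → IsCompact U → U.Nonempty →
      ∃ (n : ℕ) (E : Fin n → Set G), (∀ j, 𝒢.IsCompactOpenBisection (E j)) ∧
        (⋃ j, 𝒢.ranOn (E j) U) = 𝒢.unitSpace := by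
  intro U hU _ hUne
  obtain ⟨hUsub, V, hV, hUeq⟩ := hU
  obtain ⟨w, hw⟩ := hUne
  have key : ∀ u ∈ 𝒢.unitSpace, ∃ α, 𝒢.s α ∈ U ∧ 𝒢.r α = u := by
    intro u hu
    have hwcl : w ∈ closure (𝒢.r '' {α | 𝒢.s α = u}) := hmin u hu (hUsub hw)
    have hwV : w ∈ V := by rw [hUeq] at hw; exact hw.1
    obtain ⟨x, hxV, hxS⟩ := mem_closure_iff.mp hwcl V hV hwV
    obtain ⟨β, hβs, hβr⟩ := hxS
    refine ⟨𝒢.inv β, ?_, ?_⟩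
    · rw [𝒢.s_inv, hβr, hUeq]
      exact ⟨hxV, hβr ▸ 𝒢.r_mem β⟩
    · rw [𝒢.r_inv]; exact hβs
  have key2 : ∀ u ∈ 𝒢.unitSpace, ∃ (E W : Set G), 𝒢.IsCompactOpenBisection E ∧
      IsOpen W ∧ u ∈ W ∧ 𝒢.ranOn E U = W ∩ 𝒢.unitSpace := by
    intro u hu
    obtain ⟨α, hαU, hαr⟩ := key u hu
    have hαV : α ∈ 𝒢.s ⁻¹' V := by
      have h := hαU; rw [hUeq] at h; exact h.1
    obtain ⟨E, hE, hαE, hEV⟩ := hample α (𝒢.s ⁻¹' V) (hV.preimage 𝒢.continuous_s') hαV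
    have hset : {β ∈ E | 𝒢.s β ∈ U} = E := by
      ext β
      refine ⟨fun h => h.1, fun h => ⟨h, ?_⟩⟩
      rw [hUeq]; exact ⟨hEV h, 𝒢.s_mem β⟩
    obtain ⟨W, hW, hWE⟩ := 𝒢.r_image_open E hE.2.1
    refine ⟨E, W, hE, hW, ?_, ?_⟩
    · have hmem : u ∈ 𝒢.r '' E := ⟨α, hαE, hαr⟩
      rw [hWE] at hmem; exact hmem.1
    · rw [ranOn, hset, hWE]
  choose! E W hE hW hmemW heq using key2
  have hcover : 𝒢.unitSpace ⊆ ⋃ u ∈ 𝒢.unitSpace, W u := fun u hu =>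
    Set.mem_biUnion hu (hmemW u hu)
  obtain ⟨b, hbsub, hbfin, hbcov⟩ :=
    hcompact.elim_finite_subcover_image (fun u hu => hW u hu) hcover
  classical
  refine ⟨hbfin.toFinset.card, fun j => E ((hbfin.toFinset.equivFin.symm j : hbfin.toFinset) : G),
    fun j => ?_, ?_⟩
  · have hx : ((hbfin.toFinset.equivFin.symm j : hbfin.toFinset) : G) ∈ b :=
      hbfin.mem_toFinset.mp (hbfin.toFinset.equivFin.symm j).2
    exact hE _ (hbsub hx)
  · apply Set.Subset.antisymm
    · intro x hx
      obtain ⟨j, hj⟩ := Set.mem_iUnion.mp hx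
      obtain ⟨β, _, hβr⟩ := hj
      exact hβr ▸ 𝒢.r_mem β
    · intro u hu
      have h := hbcov hu
      simp only [Set.mem_iUnion] at h
      obtain ⟨i, hib, hiW⟩ := h
      have hit : i ∈ hbfin.toFinset := hbfin.mem_toFinset.mpr hib
      refine Set.mem_iUnion.mpr ⟨hbfin.toFinset.equivFin ⟨i, hit⟩, ?_⟩
      simp only [Equiv.symm_apply_apply]
      rw [heq i (hbsub hib)]
      exact ⟨hiW, hu⟩

lemma prop_iii_of_ii (hcompact : IsCompact 𝒢.unitSpace)
    (hii : ∀ U : Set G, 𝒢.IsUnitOpen U → IsCompact U → U.Nonempty →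
      ∃ (n : ℕ) (E : Fin n → Set G), (∀ j, 𝒢.IsCompactOpenBisection (E j)) ∧
        (⋃ j, 𝒢.ranOn (E j) U) = 𝒢.unitSpace) :
    ∀ f : G → ℤ, ContinuousOn f 𝒢.unitSpace → (∀ x ∉ 𝒢.unitSpace, f x = 0) →
      (∀ x, 0 ≤ f x) → (∃ u ∈ 𝒢.unitSpace, f u ≠ 0) →
        ∃ (n : ℕ) (E : Fin n → Set G), (∀ j, 𝒢.IsCompactOpenBisection (E j)) ∧
          ∀ u ∈ 𝒢.unitSpace, 1 ≤ ∑ j, 𝒢.act (E j) f u := by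
  intro f hf hf0 hfpos hfne
  haveI : CompactSpace ↥𝒢.unitSpace := isCompact_iff_compactSpace.mp hcompact
  have hF : Continuous (𝒢.unitSpace.restrict f) := continuousOn_iff_continuous_restrict.mp hf
  set S : Set ↥𝒢.unitSpace := (𝒢.unitSpace.restrict f) ⁻¹' {m | 1 ≤ m} with hS
  set U : Set G := Subtype.val '' S with hUdef
  have hUmem : ∀ x, x ∈ U ↔ x ∈ 𝒢.unitSpace ∧ 1 ≤ f x := by
    intro x
    constructor
    · rintro ⟨y, hy, rfl⟩; exact ⟨y.2, hy⟩
    · rintro ⟨hx, hfx⟩; exact ⟨⟨x, hx⟩, hfx, rfl⟩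
  have hUopen : 𝒢.IsUnitOpen U := by
    refine ⟨fun x hx => ((hUmem x).mp hx).1, ?_⟩
    have hSo : IsOpen S := (isOpen_discrete _).preimage hF
    rw [isOpen_induced_iff] at hSo
    obtain ⟨V, hV, hVS⟩ := hSo
    exact ⟨V, hV, by rw [hUdef, ← hVS, Subtype.image_preimage_coe, Set.inter_comm]⟩
  have hUc : IsCompact U :=
    (((isClosed_discrete _).preimage hF).isCompact).image continuous_subtype_val
  have hUne : U.Nonempty := by
    obtain ⟨u, hu, hfu⟩ := hfne
    exact ⟨u, (hUmem u).mpr ⟨hu, by have := hfpos u; omega⟩⟩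
  obtain ⟨n, E, hE, hcov⟩ := hii U hUopen hUc hUne
  refine ⟨n, E, hE, fun u hu => ?_⟩
  have hu2 : u ∈ ⋃ j, 𝒢.ranOn (E j) U := hcov ▸ hu
  obtain ⟨j, hj⟩ := Set.mem_iUnion.mp hu2
  obtain ⟨α, ⟨hαE, hαU⟩, hαr⟩ := hj
  have hterm : 1 ≤ 𝒢.act (E j) f u := by
    have hex : ∃ β ∈ E j, 𝒢.r β = u := ⟨α, hαE, hαr⟩
    simp only [act]
    rw [dif_pos hex]
    have hch := hex.choose_spec
    have hca : hex.choose = α := (hE j).2.2.1 hch.1 hαE (hch.2.trans hαr.symm)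
    rw [hca]
    exact ((hUmem _).mp hαU).2
  have hnn : ∀ i ∈ Finset.univ, (0:ℤ) ≤ 𝒢.act (E i) f u := by
    intro i _
    simp only [act]
    split
    · exact hfpos _
    · exact le_refl 0
  calc (1:ℤ) ≤ 𝒢.act (E j) f u := hterm
    _ ≤ ∑ i, 𝒢.act (E i) f u := Finset.single_le_sum hnn (Finset.mem_univ j)

lemma minimal_of_iii [T2Space G] (hample : 𝒢.Ample)
    (hiii : ∀ f : G → ℤ, ContinuousOn f 𝒢.unitSpace → (∀ x ∉ 𝒢.unitSpace, f x = 0) →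
        (∀ x, 0 ≤ f x) → (∃ u ∈ 𝒢.unitSpace, f u ≠ 0) →
          ∃ (n : ℕ) (E : Fin n → Set G), (∀ j, 𝒢.IsCompactOpenBisection (E j)) ∧
            ∀ u ∈ 𝒢.unitSpace, 1 ≤ ∑ j, 𝒢.act (E j) f u) : 𝒢.Minimal := by
  intro u hu w hw
  rw [mem_closure_iff]
  intro W hWopen hwW
  obtain ⟨E, hE, hwE, hEW⟩ := hample w W hWopen hwW
  set K : Set G := E ∩ 𝒢.unitSpace with hK
  have hKclosed : IsClosed K := (hE.1.isClosed).inter 𝒢.isClosed_unitSpace'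
  have hKclosedSub : IsClosed (Subtype.val ⁻¹' K : Set ↥𝒢.unitSpace) :=
    hKclosed.preimage continuous_subtype_val
  have hKopenSub : IsOpen (Subtype.val ⁻¹' K : Set ↥𝒢.unitSpace) := by
    have hKE : (Subtype.val ⁻¹' K : Set ↥𝒢.unitSpace) = Subtype.val ⁻¹' E := by
      ext x; simp [hK, x.2]
    rw [hKE]; exact hE.2.1.preimage continuous_subtype_val
  classical
  set f : G → ℤ := fun x => if x ∈ K then 1 else 0 with hf
  have hfc : ContinuousOn f 𝒢.unitSpace := by
    rw [continuousOn_iff_continuous_restrict]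
    apply IsLocallyConstant.continuous
    intro t
    have hrepr : (𝒢.unitSpace.restrict f) ⁻¹' t =
        (if (1:ℤ) ∈ t then (if (0:ℤ) ∈ t then Set.univ else Subtype.val ⁻¹' K)
          else (if (0:ℤ) ∈ t then (Subtype.val ⁻¹' K)ᶜ else ∅)) := by
      ext x
      by_cases hx : (x : G) ∈ K <;> by_cases h1 : (1:ℤ) ∈ t <;> by_cases h0 : (0:ℤ) ∈ t <;>
        simp [hf, Set.restrict, hx, h1, h0]
    change IsOpen ((𝒢.unitSpace.restrict f) ⁻¹' t)
    rw [hrepr]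
    split
    · split
      · exact isOpen_univ
      · exact hKopenSub
    · split
      · exact hKclosedSub.isOpen_compl
      · exact isOpen_empty
  have h0 : ∀ x ∉ 𝒢.unitSpace, f x = 0 := by
    intro x hx
    simp only [hf]
    rw [if_neg]
    intro hxK; exact hx hxK.2
  have hpos : ∀ x, 0 ≤ f x := by
    intro x; simp only [hf]; split <;> omega
  have hne : ∃ v ∈ 𝒢.unitSpace, f v ≠ 0 := by
    refine ⟨w, hw, ?_⟩
    simp only [hf]
    rw [if_pos ⟨hwE, hw⟩]
    omega
  obtain ⟨n, E', hE', hsum⟩ := hiii f hfc h0 hpos hne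
  have h1 := hsum u hu
  have hex : ∃ j ∈ Finset.univ, 𝒢.act (E' j) f u ≠ 0 := by
    by_contra hcon
    push_neg at hcon
    have hz : ∑ j, 𝒢.act (E' j) f u = 0 := Finset.sum_eq_zero (fun j hj => hcon j hj)
    rw [hz] at h1
    omega
  obtain ⟨j, _, hj⟩ := hex
  simp only [act] at hj
  by_cases hexj : ∃ α ∈ E' j, 𝒢.r α = u
  · rw [dif_pos hexj] at hj
    have hspec := hexj.choose_spec
    have hsK : 𝒢.s hexj.choose ∈ K := by
      by_contra hcon
      apply hj
      simp only [hf]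
      exact if_neg hcon
    refine ⟨𝒢.r (𝒢.inv hexj.choose), ?_, ?_⟩
    · rw [𝒢.r_inv]; exact hEW hsK.1
    · exact ⟨𝒢.inv hexj.choose, by rw [Set.mem_setOf_eq, 𝒢.s_inv]; exact hspec.2, rfl⟩
  · rw [dif_neg hexj] at hj
    exact absurd rfl hj

end EtaleGroupoid
/-- For an ample étale groupoid with compact unit space, the following
are equivalent: (i) minimality; (ii) every nonempty compact open `U ⊆ G⁰` admits compact
open bisections `E₁, …, Eₙ` with `⋃ⱼ U_{Eⱼ} = G⁰`; (iii) for every nonzero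
`f ∈ C(G⁰, ℤ)⁺` there are compact open bisections `E₁, …, Eₙ` with `Σⱼ Eⱼf ≥ 1_{G⁰}`. -/
theorem minimal_tfae_ample {G : Type*} [TopologicalSpace G]
    [LocallyCompactSpace G] [T2Space G] [SecondCountableTopology G]
    (𝒢 : EtaleGroupoid G) (hample : 𝒢.Ample) (hcompact : IsCompact 𝒢.unitSpace) :
    (𝒢.Minimal ↔
      ∀ U : Set G, 𝒢.IsUnitOpen U → IsCompact U → U.Nonempty →
        ∃ (n : ℕ) (E : Fin n → Set G), (∀ j, 𝒢.IsCompactOpenBisection (E j)) ∧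
          (⋃ j, 𝒢.ranOn (E j) U) = 𝒢.unitSpace) ∧
    (𝒢.Minimal ↔
      ∀ f : G → ℤ, ContinuousOn f 𝒢.unitSpace → (∀ x ∉ 𝒢.unitSpace, f x = 0) →
        (∀ x, 0 ≤ f x) → (∃ u ∈ 𝒢.unitSpace, f u ≠ 0) →
          ∃ (n : ℕ) (E : Fin n → Set G), (∀ j, 𝒢.IsCompactOpenBisection (E j)) ∧
            ∀ u ∈ 𝒢.unitSpace, 1 ≤ ∑ j, 𝒢.act (E j) f u) := by
  refine ⟨⟨fun hmin => 𝒢.prop_ii_of_minimal hample hcompact hmin,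
    fun hii => 𝒢.minimal_of_iii hample (𝒢.prop_iii_of_ii hcompact hii)⟩,
    ⟨fun hmin => 𝒢.prop_iii_of_ii hcompact (𝒢.prop_ii_of_minimal hample hcompact hmin),
    fun hiii => 𝒢.minimal_of_iii hample hiii⟩⟩
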